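/- For any fixed k ≥ 3 and any n ≥ 2k+2, the cardinality of 𝒱^(k)(n) equals (S^(k−1)(n − 2k − 1) − 1 + δ_n^(k)) / 2, where δ_n^(k) = 1 if k divides n and δ_n^(k) = 0 otherwise. -/

import Mathlib

/-!
Binary strings are modeled as `List Bool`, with `true` = 1 and `false` = 0.
-/

/-- A string `v` is bifix-free if no nonempty proper prefix of `v` equals a
(proper) suffix of `v`. -/
def BifixFree (v : List Bool) : Prop :=
  ∀ p : List Bool, p ≠ [] → p ≠ v → p <+: v → ¬ p <:+ v

/-- The set `V_n^(k)`: binary strings of length `n` starting with `k` ones,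
ending with `k` zeros, whose middle factor `v_{k+1} … v_{n-k}` begins with 0,
ends with 1, and contains neither `k` consecutive 0's nor `k` consecutive 1's. -/
def Vnk (n k : ℕ) : Set (List Bool) :=
  {v | v.length = n ∧
    List.replicate k true <+: v ∧
    List.replicate k false <:+ v ∧
    ((v.drop k).take (n - 2 * k)).head? = some false ∧
    ((v.drop k).take (n - 2 * k)).getLast? = some true ∧
    ¬ List.replicate k false <:+: ((v.drop k).take (n - 2 * k)) ∧
    ¬ List.replicate k true <:+: ((v.drop k).take (n - 2 * k))}

/-- `𝒱^(k) = ⋃_{i ≥ 2k+2} V_i^(k)`. -/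
def VkSet (k : ℕ) : Set (List Bool) := ⋃ i ∈ {i : ℕ | 2 * k + 2 ≤ i}, Vnk i k

/-- `𝒱^(k)(n)`: elements of `𝒱^(k)` of length at most `n`. -/
def VkLe (k n : ℕ) : Set (List Bool) := {v ∈ VkSet k | v.length ≤ n}

/-- The set of binary strings of length `ℓ` that begin with 0, end with 1, and
contain neither `k` consecutive 0's nor `k` consecutive 1's. -/
def Rset (k ℓ : ℕ) : Set (List Bool) :=
  {w | w.length = ℓ ∧ w.head? = some false ∧ w.getLast? = some true ∧
    ¬ List.replicate k false <:+: w ∧ ¬ List.replicate k true <:+: w}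

/-- `r_ℓ^(k)`, with the convention `r_0^(k) = 1`. -/
noncomputable def r (k ℓ : ℕ) : ℕ := if ℓ = 0 then 1 else (Rset k ℓ).ncard

/-- Shifted `k`-generalized Fibonacci numbers: `f_ℓ^(k) = 2^ℓ` for `ℓ ≤ k-1`, and
`f_ℓ^(k) = ∑_{i=1}^{k} f_{ℓ-i}^(k)` for `ℓ ≥ k`. -/
def f (k : ℕ) : ℕ → ℕ
  | ℓ =>
    if h : ℓ < k then 2 ^ ℓ
    else ∑ i ∈ (Finset.range k).attach, f k (ℓ - (i.1 + 1))
termination_by ℓ => ℓ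
decreasing_by
  have hi := i.2
  simp only [Finset.mem_range] at hi
  omega

/-- `S^(k)(n) = ∑_{ℓ=0}^{n} f_ℓ^(k)`. -/
def S (k n : ℕ) : ℕ := ∑ ℓ ∈ Finset.range (n + 1), f k ℓ

/-- `d_ℓ^(k)`: 1 if `ℓ ≡ 0 (mod k)`, -1 if `ℓ ≡ 1 (mod k)`, 0 otherwise. -/
def d (k ℓ : ℕ) : ℤ := if ℓ % k = 0 then 1 else if ℓ % k = 1 then -1 else 0

/-- A set of binary strings is a cross-fix-free code if every element is
bifix-free and, for any two distinct elements `v, v'`, no nonempty prefix of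
`v` (including `v` itself) is a suffix of `v'`, and vice versa. -/
def CrossFixFree (X : Set (List Bool)) : Prop :=
  (∀ v ∈ X, BifixFree v) ∧
  ∀ v ∈ X, ∀ v' ∈ X, v ≠ v' → ∀ p : List Bool, p ≠ [] → p <+: v → ¬ p <:+ v'

/-- A strong cross-fix-free code: cross-fix-free and no codeword is a factor of
another. -/
def StrongCrossFixFree (X : Set (List Bool)) : Prop :=
  CrossFixFree X ∧ ∀ v ∈ X, ∀ v' ∈ X, v ≠ v' → ¬ v <:+: v'

/-- A Dyck word: equal numbers of 1's and 0's, and every prefix has at least as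
many 1's as 0's. -/
def IsDyck (w : List Bool) : Prop :=
  w.count true = w.count false ∧ ∀ p : List Bool, p <+: w → p.count false ≤ p.count true

/-- `𝒟 = { 1α0 : α a Dyck word }`. -/
def Dset : Set (List Bool) := {v | ∃ α : List Bool, IsDyck α ∧ v = true :: (α ++ [false])}

/-- `𝒟(n)`: elements of `𝒟` of length at most `n`. -/
def DLe (n : ℕ) : Set (List Bool) := {v ∈ Dset | v.length ≤ n}

/-- Prefix of an append splits. -/
lemma prefix_append_split {α : Type*} {u l₁ l₂ : List α} (h : u <+: l₁ ++ l₂) :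
    u <+: l₁ ∨ ∃ u₂, u = l₁ ++ u₂ ∧ u₂ <+: l₂ := by
  rcases le_or_gt u.length l₁.length with hle | hlt
  · exact Or.inl (List.prefix_of_prefix_length_le h (List.prefix_append l₁ l₂) hle)
  · right
    have hl : l₁ <+: u := List.prefix_of_prefix_length_le (List.prefix_append l₁ l₂) h hlt.le
    obtain ⟨u₂, rfl⟩ := hl
    refine ⟨u₂, rfl, ?_⟩
    obtain ⟨t, ht⟩ := h
    rw [List.append_assoc] at ht
    exact ⟨t, List.append_cancel_left ht⟩

/-- Infix of an append splits into three cases. -/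
lemma infix_append_split {α : Type*} {u l₁ l₂ : List α} (h : u <:+: l₁ ++ l₂) :
    u <:+: l₁ ∨ u <:+: l₂ ∨
      ∃ u₁ u₂, u = u₁ ++ u₂ ∧ u₁ ≠ [] ∧ u₂ ≠ [] ∧ u₁ <:+ l₁ ∧ u₂ <+: l₂ := by
  induction l₁ with
  | nil => exact Or.inr (Or.inl (by simpa using h))
  | cons x xs ih =>
    rw [List.cons_append, List.infix_cons_iff] at h
    rcases h with h | h
    · rcases prefix_append_split (by simpa using h : u <+: (x :: xs) ++ l₂) with h1 | ⟨u₂, rfl, h2⟩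
      · exact Or.inl h1.isInfix
      · rcases eq_or_ne u₂ [] with rfl | hne
        · exact Or.inl (by simpa using List.infix_refl (x :: xs))
        · exact Or.inr (Or.inr ⟨x :: xs, u₂, rfl, by simp, hne, List.suffix_refl _, h2⟩)
    · rcases ih h with h1 | h2 | ⟨u₁, u₂, rfl, hn1, hn2, hs, hp⟩
      · exact Or.inl (List.infix_cons h1)
      · exact Or.inr (Or.inl h2)
      · exact Or.inr (Or.inr ⟨u₁, u₂, rfl, hn1, hn2, hs.trans (List.suffix_cons x xs), hp⟩)

/-- The key no-run extension lemma. -/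
lemma not_infix_replicate_append {k t : ℕ} {a c : Bool} {w : List Bool} (ht : t < k)
    (hw : ¬ List.replicate k c <:+: w) (hh : w.head? = some (!a)) :
    ¬ List.replicate k c <:+: (List.replicate t a ++ w) := by
  intro h
  rcases infix_append_split h with h1 | h2 | ⟨u₁, u₂, heq, hn1, hn2, hs, hp⟩
  · have := h1.length_le
    simp at this
    omega
  · exact hw h2
  · -- u₁ is a suffix of replicate t a, so all its elements are a; also all elements of
    -- replicate k c are c; u₁ nonempty gives c = a.
    have hmem1 : ∀ x ∈ u₁, x = a := fun x hx =>
      List.eq_of_mem_replicate (hs.subset hx)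
    have hmemc : ∀ x ∈ u₁, x = c := fun x hx => by
      have : x ∈ List.replicate k c := by rw [heq]; exact List.mem_append_left _ hx
      exact List.eq_of_mem_replicate this
    obtain ⟨x, hx⟩ := List.exists_mem_of_ne_nil u₁ hn1
    have hca : c = a := (hmemc x hx).symm.trans (hmem1 x hx)
    -- u₂ is a nonempty prefix of w consisting of c = a, so w.head? = some a
    have hmem2 : ∀ x ∈ u₂, x = c := fun x hx => by
      have : x ∈ List.replicate k c := by rw [heq]; exact List.mem_append_right _ hx
      exact List.eq_of_mem_replicate this
    obtain ⟨y, u₂', rfl⟩ := List.exists_cons_of_ne_nil hn2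
    have hy : y = c := hmem2 y (by simp)
    obtain ⟨s, hps⟩ := hp
    rw [← hps] at hh
    simp [hy, hca] at hh

def allB : ℕ → Finset (List Bool)
  | 0 => {[]}
  | n+1 => (allB n).biUnion (fun l => {true :: l, false :: l})

lemma mem_allB {n : ℕ} {w : List Bool} : w ∈ allB n ↔ w.length = n := by
  induction n generalizing w with
  | zero => simp [allB, List.length_eq_zero_iff]
  | succ n ih =>
    simp only [allB, Finset.mem_biUnion, Finset.mem_insert, Finset.mem_singleton]
    constructor
    · rintro ⟨l, hl, rfl | rfl⟩ <;> simp [ih.mp hl]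
    · intro h
      match w with
      | x :: l =>
        refine ⟨l, ih.mpr (by simpa using h), ?_⟩
        cases x <;> simp

open Classical in
/-- Strings of length ℓ with head `a`, last `b`, and no `k` consecutive equal symbols. -/
noncomputable def PF (k ℓ : ℕ) (a b : Bool) : Finset (List Bool) :=
  (allB ℓ).filter (fun w => w.head? = some a ∧ w.getLast? = some b ∧
    ¬ List.replicate k false <:+: w ∧ ¬ List.replicate k true <:+: w)

lemma mem_PF {k ℓ : ℕ} {a b : Bool} {w : List Bool} :
    w ∈ PF k ℓ a b ↔ w.length = ℓ ∧ w.head? = some a ∧ w.getLast? = some b ∧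
      ¬ List.replicate k false <:+: w ∧ ¬ List.replicate k true <:+: w := by
  simp [PF, Finset.mem_filter, mem_allB, and_assoc]

open Classical in
lemma PF_decomp {k ℓ : ℕ} {a b : Bool} (hk : 2 ≤ k) :
    PF k ℓ a b =
      (Finset.Icc 1 (min (k-1) (ℓ-1))).biUnion
        (fun t => (PF k (ℓ - t) (!a) b).image (fun w => List.replicate t a ++ w))
      ∪ (if a = b ∧ 1 ≤ ℓ ∧ ℓ ≤ k - 1 then {List.replicate ℓ a} else ∅) := by
  ext w
  simp only [Finset.mem_union, Finset.mem_biUnion, Finset.mem_image, Finset.mem_Icc]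
  constructor
  · intro hw
    obtain ⟨hlen, hhead, hlast, hf, ht⟩ := mem_PF.mp hw
    have hwne : w ≠ [] := by intro h; subst h; simp at hhead
    set t := (w.takeWhile (· == a)).length with htdef
    have htw : w.takeWhile (· == a) = List.replicate t a :=
      List.eq_replicate_iff.mpr ⟨rfl, fun x hx => by
        have := List.mem_takeWhile_imp hx; simpa using this⟩
    have ht1 : 1 ≤ t := by
      obtain ⟨x, w', rfl⟩ := List.exists_cons_of_ne_nil hwne
      have hx : x = a := by simpa using hhead
      rw [htdef, List.takeWhile_cons_of_pos (by simp [hx])]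
      simp
    have hta : ¬ List.replicate k a <:+: w := by
      cases a
      · exact hf
      · exact ht
    have htk : t ≤ k - 1 := by
      by_contra hcon
      apply hta
      have : List.replicate k a <+: List.replicate t a := by
        rw [show t = k + (t - k) by omega, List.replicate_add]
        exact List.prefix_append _ _
      exact ((this.trans (htw ▸ List.takeWhile_prefix _)).isInfix)
    have htle : t ≤ ℓ := by
      rw [← hlen, htdef]; exact (List.takeWhile_prefix _).length_le
    rcases eq_or_lt_of_le htle with heq | hlt
    · -- w = replicate ℓ a
      right
      have hww : w = List.replicate ℓ a := by
        have hpfx : w.takeWhile (· == a) <+: w := List.takeWhile_prefix _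
        have := hpfx.eq_of_length (by rw [hlen, ← heq])
        rw [← this, htw, heq]
      have hba : b = a := by
        rw [hww] at hlast
        rw [show ℓ = (ℓ - 1) + 1 by omega, List.replicate_add] at hlast
        simp at hlast
        exact hlast.symm
      rw [if_pos ⟨hba.symm, by omega, by omega⟩]
      simpa using hww
    · -- peel
      left
      set w' := w.dropWhile (· == a) with hw'def
      have hsplit : List.replicate t a ++ w' = w := by
        rw [← htw]; exact List.takeWhile_append_dropWhile
      have hw'len : w'.length = ℓ - t := by
        have := congrArg List.length hsplit
        simp at this; omega
    
      have hw'ne : w' ≠ [] := by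
        intro h; rw [h] at hw'len; simp at hw'len; omega
      obtain ⟨y, ys, hy⟩ := List.exists_cons_of_ne_nil hw'ne
      have hw'head : w'.head? = some (!a) := by
        have h1 := List.head?_dropWhile_not (· == a) w
        rw [← hw'def, hy] at h1
        simp at h1
        rw [hy]
        revert h1
        cases a <;> cases y <;> simp
      refine ⟨t, ⟨ht1, by omega⟩, w', ?_, hsplit⟩
      have hw'suf : w' <:+: w := (List.dropWhile_suffix _).isInfix
      refine mem_PF.mpr ⟨hw'len, hw'head, ?_, fun h => hf (h.trans hw'suf),
        fun h => ht (h.trans hw'suf)⟩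
      rw [← hsplit, List.getLast?_append, List.getLast?_eq_getLast hw'ne] at hlast
      rw [List.getLast?_eq_getLast hw'ne]
      simpa using hlast
  · rintro (⟨t, ⟨ht1, ht2⟩, w', hw', rfl⟩ | hsing)
    · obtain ⟨hlen, hhead, hlast, hf, ht⟩ := mem_PF.mp hw'
      have hw'ne : w' ≠ [] := by intro h; subst h; simp at hhead
      refine mem_PF.mpr ⟨by simp [hlen]; omega, ?_, ?_, ?_, ?_⟩
      · rw [List.head?_append]
        rw [show t = 1 + (t-1) by omega, List.replicate_add]
        simp
      · rw [List.getLast?_append, List.getLast?_eq_getLast hw'ne]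
        simp [List.getLast?_eq_getLast hw'ne] at hlast ⊢
        exact hlast
      · exact not_infix_replicate_append (by omega) hf hhead
      · exact not_infix_replicate_append (by omega) ht hhead
    · rcases Decidable.em (a = b ∧ 1 ≤ ℓ ∧ ℓ ≤ k - 1) with hc | hc
      · rw [if_pos hc] at hsing
        simp at hsing
        subst hsing
        obtain ⟨hab, h1, h2⟩ := hc
        have hrep : ∀ c : Bool, ¬ List.replicate k c <:+: List.replicate ℓ a := by
          intro c h
          have := h.length_le
          simp at this
          omega
        refine mem_PF.mpr ⟨by simp, ?_, ?_, hrep false, hrep true⟩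
        · rw [show ℓ = 1 + (ℓ - 1) by omega, List.replicate_add]; simp
        · rw [show ℓ = (ℓ - 1) + 1 by omega, List.replicate_add]
          simp [hab]
      · rw [if_neg hc] at hsing; simp at hsing

lemma head_drop_of_mem_image {k m t : ℕ} {a b : Bool} {v : List Bool}
    (hv : v ∈ (PF k m (!a) b).image (fun w => List.replicate t a ++ w)) :
    (v.drop t).head? = some (!a) := by
  simp only [Finset.mem_image] at hv
  obtain ⟨w, hw, rfl⟩ := hv
  obtain ⟨hlen, hhead, -⟩ := mem_PF.mp hw
  rw [List.drop_left' (by simp)]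
  exact hhead

lemma no_common_image {k m m' : ℕ} {a b : Bool} {s t : ℕ} (hst : s < t) {v : List Bool}
    (hvs : v ∈ (PF k m (!a) b).image (fun w => List.replicate s a ++ w))
    (hvt : v ∈ (PF k m' (!a) b).image (fun w => List.replicate t a ++ w)) : False := by
  have h1 := head_drop_of_mem_image hvs
  simp only [Finset.mem_image] at hvt
  obtain ⟨w, hw, rfl⟩ := hvt
  rw [show List.replicate t a = List.replicate s a ++ List.replicate (t - s) a by
      rw [← List.replicate_add]; congr 1; omega,
    List.append_assoc, List.drop_left' (by simp)] at h1
  rw [show t - s = (t - s - 1) + 1 by omega, List.replicate_succ] at h1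
  simp at h1

lemma PF_card {k ℓ : ℕ} {a b : Bool} (hk : 2 ≤ k) :
    (PF k ℓ a b).card =
      (∑ t ∈ Finset.Icc 1 (min (k-1) (ℓ-1)), (PF k (ℓ - t) (!a) b).card)
      + (if a = b ∧ 1 ≤ ℓ ∧ ℓ ≤ k - 1 then 1 else 0) := by
  classical
  rw [PF_decomp hk, Finset.card_union_of_disjoint, Finset.card_biUnion]
  · congr 1
    · exact Finset.sum_congr rfl (fun t ht => Finset.card_image_of_injective _
        (fun x y hxy => List.append_cancel_left hxy))
    · split_ifs <;> simp
  · intro s hs t ht hst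
    rw [Function.onFun, Finset.disjoint_left]
    intro v hvs hvt
    rcases hst.lt_or_gt with hlt | hlt
    · exact no_common_image hlt hvs hvt
    · exact no_common_image hlt hvt hvs
  · rw [Finset.disjoint_right]
    intro v hv hvb
    split_ifs at hv with hc
    · simp only [Finset.mem_singleton] at hv
      subst hv
      simp only [Finset.mem_biUnion, Finset.mem_Icc] at hvb
      obtain ⟨t, ⟨ht1, ht2⟩, hmem⟩ := hvb
      have hh := head_drop_of_mem_image hmem
      rw [List.drop_replicate] at hh
      rw [show ℓ - t = (ℓ - t - 1) + 1 by omega, List.replicate_succ] at hh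
      simp at hh
    · simp at hv

lemma map_not_mem_PF {k ℓ : ℕ} {a b : Bool} {w : List Bool} (hw : w ∈ PF k ℓ a b) :
    w.map not ∈ PF k ℓ (!a) (!b) := by
  obtain ⟨hlen, hh, hl, hf, ht⟩ := mem_PF.mp hw
  refine mem_PF.mpr ⟨by simp [hlen], ?_, ?_, ?_, ?_⟩
  · rw [List.head?_map, hh]; rfl
  · rw [List.getLast?_map, hl]; rfl
  · intro h
    have := h.map not
    rw [List.map_map, List.map_replicate] at this
    simp at this
    exact ht (by simpa [Function.comp_def, Bool.not_not] using this)
  · intro h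
    have := h.map not
    rw [List.map_map, List.map_replicate] at this
    simp at this
    exact hf (by simpa [Function.comp_def, Bool.not_not] using this)

lemma PF_card_neg {k ℓ : ℕ} {a b : Bool} :
    (PF k ℓ (!a) (!b)).card = (PF k ℓ a b).card := by
  classical
  have himg : PF k ℓ (!a) (!b) = (PF k ℓ a b).image (List.map not) := by
    ext w
    simp only [Finset.mem_image]
    constructor
    · intro hw
      refine ⟨w.map not, by simpa using map_not_mem_PF hw, by simp [Function.comp_def, Bool.not_not]⟩
    · rintro ⟨u, hu, rfl⟩
      exact map_not_mem_PF hu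
  rw [himg, Finset.card_image_of_injective]
  intro x y hxy
  have := congrArg (List.map not) hxy
  simpa [Function.comp_def, Bool.not_not] using this

lemma f_small {k ℓ : ℕ} (h : ℓ < k) : f k ℓ = 2 ^ ℓ := by
  rw [f, dif_pos h]

lemma Icc_one_eq_map {k : ℕ} (hk : 1 ≤ k) :
    Finset.Icc 1 k = Finset.map (addRightEmbedding 1) (Finset.Icc 0 (k-1)) := by
  rw [Finset.map_add_right_Icc]
  congr 1
  omega

lemma Icc_zero_eq_range {k : ℕ} : Finset.Icc 0 k = Finset.range (k+1) := by
  ext x; simp [Finset.mem_Icc, Finset.mem_range]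

lemma f_rec {k ℓ : ℕ} (hk : 1 ≤ k) (h : ¬ ℓ < k) :
    f k ℓ = ∑ t ∈ Finset.Icc 1 k, f k (ℓ - t) := by
  rw [f, dif_neg h]
  rw [Finset.sum_attach (Finset.range k) (fun i => f k (ℓ - (i + 1)))]
  rw [Icc_one_eq_map hk, Finset.sum_map,
    show Finset.Icc 0 (k-1) = Finset.range k by
      rw [Icc_zero_eq_range]; congr 1; omega]
  rfl

private lemma two_pow_sum (m : ℕ) : ∑ j ∈ Finset.range m, 2^j = 2^m - 1 := by
  induction m with
  | zero => simp
  | succ m ih =>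
    rw [Finset.sum_range_succ, ih]
    have : 1 ≤ 2^m := Nat.one_le_two_pow
    omega

/-- reflected sum over `Icc 1 m`. -/
lemma sum_Icc_reflect {M : Type*} [AddCommMonoid M] (g : ℕ → M) (m : ℕ) :
    ∑ t ∈ Finset.Icc 1 m, g (m - t) = ∑ j ∈ Finset.range m, g j := by
  rcases Nat.eq_zero_or_pos m with rfl | hm
  · simp
  rw [Icc_one_eq_map hm, Finset.sum_map,
    show Finset.Icc 0 (m-1) = Finset.range m by
      rw [Icc_zero_eq_range]; congr 1; omega]
  rw [← Finset.sum_range_reflect (fun j => g j) m]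
  refine Finset.sum_congr rfl (fun x hx => ?_)
  simp only [Finset.mem_range] at hx
  congr 1
  simp [addRightEmbedding]
  omega

lemma sum_f_small {k m : ℕ} (h : m < k) :
    (∑ t ∈ Finset.Icc 1 m, f k (m - t)) + 1 = 2 ^ m := by
  rw [sum_Icc_reflect (f k) m]
  have : ∀ j ∈ Finset.range m, f k j = 2 ^ j := fun j hj => by
    simp only [Finset.mem_range] at hj
    exact f_small (by omega)
  rw [Finset.sum_congr rfl this, two_pow_sum]
  have : 1 ≤ 2^m := Nat.one_le_two_pow
  omega

-- d lemmas
lemma d_window {k : ℕ} (hk : 2 ≤ k) (m : ℕ) :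
    ∑ j ∈ Finset.range k, d k (m + j) = 0 := by
  induction m with
  | zero =>
    rw [Finset.range_eq_Ico, Finset.sum_eq_sum_Ico_succ_bot (by omega),
      Finset.sum_eq_sum_Ico_succ_bot (by omega)]
    have h0 : d k (0 + 0) = 1 := by simp [d, Nat.zero_mod]
    have h1 : d k (0 + 1) = -1 := by
      simp [d, Nat.mod_eq_of_lt (show 1 < k by omega)]
    have h2 : ∑ j ∈ Finset.Ico 2 k, d k (0 + j) = 0 := by
      refine Finset.sum_eq_zero (fun j hj => ?_)
      simp only [Finset.mem_Ico] at hj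
      simp [d, Nat.mod_eq_of_lt hj.2]
      omega
    rw [h0, h1, h2]
    ring
  | succ m ih =>
    have e1 : ∑ j ∈ Finset.range (k+1), d k (m + j)
        = ∑ j ∈ Finset.range k, d k (m + j) + d k (m + k) := Finset.sum_range_succ _ _
    have e2 : ∑ j ∈ Finset.range (k+1), d k (m + j)
        = ∑ j ∈ Finset.range k, d k (m + (j+1)) + d k (m + 0) := Finset.sum_range_succ' _ _
    have e3 : d k (m + k) = d k m := by
      simp [d, Nat.add_mod_right]
    have e4 : ∀ j, d k (m + (j + 1)) = d k ((m+1) + j) := fun j => by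
      congr 1; omega
    simp only [e4] at e2
    simp only [Nat.add_zero] at e2
    rw [e1, e3] at e2
    omega

/-- For `ℓ ≥ k`: `d k ℓ = - ∑_{t=1}^{k-1} d k (ℓ - t)`. -/
lemma d_rec_large {k ℓ : ℕ} (hk : 2 ≤ k) (hℓ : k ≤ ℓ) :
    d k ℓ = - ∑ t ∈ Finset.Icc 1 (k-1), d k (ℓ - t) := by
  have key : ∑ t ∈ Finset.Icc 0 (k-1), d k (ℓ - t) = 0 := by
    have h1 : ∀ t ∈ Finset.Icc 0 (k-1), d k (ℓ - t) = d k ((ℓ - (k-1)) + ((k-1) - t)) := by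
      intro t ht
      simp only [Finset.mem_Icc] at ht
      congr 1
      omega
    rw [Finset.sum_congr rfl h1]
    have h2 : ∑ t ∈ Finset.Icc 0 (k-1), d k ((ℓ - (k-1)) + ((k-1) - t))
        = ∑ t ∈ Finset.Icc 1 k, d k ((ℓ - (k-1)) + (k - t)) := by
      rw [show Finset.Icc 1 k = Finset.map (addRightEmbedding 1) (Finset.Icc 0 (k-1)) by
        rw [Finset.map_add_right_Icc]; congr 1; omega, Finset.sum_map]
      refine Finset.sum_congr rfl (fun x hx => ?_)
      simp only [Finset.mem_Icc] at hx
      congr 1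
      simp [addRightEmbedding]
      omega
    rw [h2, sum_Icc_reflect (fun j => d k ((ℓ - (k-1)) + j)) k]
    exact d_window hk _
  have split : ∑ t ∈ Finset.Icc 0 (k-1), d k (ℓ - t)
      = d k ℓ + ∑ t ∈ Finset.Icc 1 (k-1), d k (ℓ - t) := by
    rw [show Finset.Icc 0 (k-1) = Finset.Ico 0 k by
        rw [← Finset.Ico_add_one_right_eq_Icc]; congr 1; omega,
      Finset.sum_eq_sum_Ico_succ_bot (by omega),
      show Finset.Ico 1 k = Finset.Icc 1 (k-1) by
        rw [← Finset.Ico_add_one_right_eq_Icc]; congr 1; omega]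
    simp
  rw [split] at key
  linarith

/-- For `2 ≤ ℓ ≤ k-1`: the sum `∑_{t=1}^{ℓ-1} d k (ℓ - t) = -1`. -/
lemma d_sum_small {k ℓ : ℕ} (hk : 2 ≤ k) (h2 : 2 ≤ ℓ) (hℓ : ℓ ≤ k - 1) :
    ∑ t ∈ Finset.Icc 1 (ℓ-1), d k (ℓ - t) = -1 := by
  rw [Finset.sum_eq_single (ℓ-1)]
  · rw [show ℓ - (ℓ-1) = 1 by omega]
    simp [d, Nat.mod_eq_of_lt (show 1 < k by omega)]
  · intro t ht hne
    simp only [Finset.mem_Icc] at ht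
    have h1 : ℓ - t < k := by omega
    have h3 : ℓ - t ≠ 0 := by omega
    have h4 : ℓ - t ≠ 1 := by omega
    simp [d, Nat.mod_eq_of_lt h1, h3, h4]
  · intro h
    simp only [Finset.mem_Icc] at h
    omega

lemma d_eval_small {k ℓ : ℕ} (hk : 2 ≤ k) (h2 : 2 ≤ ℓ) (hℓ : ℓ ≤ k - 1) : d k ℓ = 0 := by
  have h1 : ℓ % k = ℓ := Nat.mod_eq_of_lt (by omega)
  simp [d, h1]
  omega

lemma d_one {k : ℕ} (hk : 2 ≤ k) : d k 1 = -1 := by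
  simp [d, Nat.mod_eq_of_lt (show 1 < k by omega)]

lemma sum_d_partial {k : ℕ} (hk : 2 ≤ k) (m : ℕ) :
    ∑ ℓ ∈ Finset.range (m+1), d k ℓ = if m % k = 0 then 1 else 0 := by
  induction m with
  | zero => simp [d]
  | succ m ih =>
    rw [Finset.sum_range_succ, ih]
    have hmod : (m+1) % k = (m % k + 1) % k := by
      conv_lhs => rw [Nat.add_mod, Nat.mod_eq_of_lt (show 1 < k by omega)]
    have hlt : m % k < k := Nat.mod_lt _ (by omega)
    rcases eq_or_ne (m % k) (k - 1) with he | hne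
    · have h1 : (m+1) % k = 0 := by rw [hmod, he, show k - 1 + 1 = k by omega, Nat.mod_self]
      have h2 : m % k ≠ 0 := by omega
      simp [d, h1, h2]
    · have h1 : (m+1) % k = m % k + 1 := by
        rw [hmod, Nat.mod_eq_of_lt (by omega)]
      have h2 : (m+1) % k ≠ 0 := by omega
      rcases eq_or_ne (m % k) 0 with hz | hz
      · have h3 : (m+1) % k = 1 := by omega
        simp [d, h2, h3, hz]
      · have h3 : (m+1) % k ≠ 1 := by omega
        simp [d, h2, h3, hz]

lemma sum_d_Icc2 {k m : ℕ} (hk : 2 ≤ k) (hm : 2 ≤ m) :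
    ∑ ℓ ∈ Finset.Icc 2 m, d k ℓ = if m % k = 0 then 1 else 0 := by
  have := sum_d_partial hk m
  rw [show Finset.range (m+1) = Finset.Ico 0 (m+1) by rw [Finset.range_eq_Ico],
    Finset.sum_eq_sum_Ico_succ_bot (by omega), Finset.sum_eq_sum_Ico_succ_bot (by omega),
    Finset.Ico_add_one_right_eq_Icc] at this
  have h0 : d k 0 = 1 := by simp [d]
  rw [h0, d_one hk] at this
  linarith

lemma PF_neg1 {k ℓ : ℕ} : (PF k ℓ (!false) true).card = (PF k ℓ false false).card :=
  PF_card_neg (a := false) (b := false)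
lemma PF_neg2 {k ℓ : ℕ} : (PF k ℓ (!false) false).card = (PF k ℓ false true).card :=
  PF_card_neg (a := false) (b := true)

lemma main_count {k : ℕ} (hk : 3 ≤ k) : ∀ ℓ, 1 ≤ ℓ →
    ((PF k ℓ false true).card + (PF k ℓ false false).card = f (k-1) (ℓ-1)) ∧
    (((PF k ℓ false true).card : ℤ) - ((PF k ℓ false false).card : ℤ) = d k ℓ) := by
  intro ℓ
  induction ℓ using Nat.strong_induction_on with
  | _ ℓ IH =>
    intro hℓ
    have hk2 : 2 ≤ k := by omega
    have hA : (PF k ℓ false true).card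
        = ∑ t ∈ Finset.Icc 1 (min (k-1) (ℓ-1)), (PF k (ℓ - t) false false).card := by
      rw [PF_card hk2, if_neg (by simp), add_zero,
        Finset.sum_congr rfl (fun t ht => (PF_neg1 (k := k) (ℓ := ℓ - t)))]
    have hB : (PF k ℓ false false).card
        = (∑ t ∈ Finset.Icc 1 (min (k-1) (ℓ-1)), (PF k (ℓ - t) false true).card)
          + (if ℓ ≤ k - 1 then 1 else 0) := by
      rw [PF_card hk2]
      have hcond : (false = false ∧ 1 ≤ ℓ ∧ ℓ ≤ k - 1) ↔ (ℓ ≤ k - 1) := by simp [hℓ]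
      rw [if_congr hcond rfl rfl,
        Finset.sum_congr rfl (fun t ht => (PF_neg2 (k := k) (ℓ := ℓ - t)))]
    have hIH : ∀ t ∈ Finset.Icc 1 (min (k-1) (ℓ-1)),
        ((PF k (ℓ-t) false true).card + (PF k (ℓ-t) false false).card = f (k-1) (ℓ-t-1)) ∧
        (((PF k (ℓ-t) false true).card : ℤ) - ((PF k (ℓ-t) false false).card : ℤ)
          = d k (ℓ-t)) := by
      intro t ht
      simp only [Finset.mem_Icc] at ht
      exact IH (ℓ - t) (by omega) (by omega)
    constructor
    · -- sum identity
      rw [hA, hB, ← add_assoc, ← Finset.sum_add_distrib]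
      have hsum : ∀ t ∈ Finset.Icc 1 (min (k-1) (ℓ-1)),
          (PF k (ℓ-t) false false).card + (PF k (ℓ-t) false true).card
            = f (k-1) ((ℓ-1) - t) := by
        intro t ht
        have h1 := (hIH t ht).1
        simp only [Finset.mem_Icc] at ht
        rw [show (ℓ-1) - t = ℓ - t - 1 by omega, ← h1]
        ring
      rw [Finset.sum_congr rfl hsum]
      rcases le_or_gt ℓ (k-1) with hle | hgt
      · rw [if_pos hle, show min (k-1) (ℓ-1) = ℓ-1 by omega]
        rw [sum_f_small (show ℓ-1 < k-1 by omega), f_small (show ℓ-1 < k-1 by omega)]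
      · rw [if_neg (by omega), show min (k-1) (ℓ-1) = k-1 by omega, add_zero]
        rw [f_rec (show 1 ≤ k-1 by omega) (show ¬ ℓ-1 < k-1 by omega)]
    · -- difference identity
      have hAZ : ((PF k ℓ false true).card : ℤ)
          = ∑ t ∈ Finset.Icc 1 (min (k-1) (ℓ-1)), ((PF k (ℓ - t) false false).card : ℤ) := by
        rw [hA]; push_cast; ring
      have hBZ : ((PF k ℓ false false).card : ℤ)
          = (∑ t ∈ Finset.Icc 1 (min (k-1) (ℓ-1)), ((PF k (ℓ - t) false true).card : ℤ))
            + (if ℓ ≤ k - 1 then 1 else 0) := by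
        rw [hB]; push_cast
        split_ifs <;> push_cast <;> ring
      rw [hAZ, hBZ, sub_add_eq_sub_sub, ← Finset.sum_sub_distrib]
      have hsum : ∀ t ∈ Finset.Icc 1 (min (k-1) (ℓ-1)),
          ((PF k (ℓ-t) false false).card : ℤ) - ((PF k (ℓ-t) false true).card : ℤ)
            = - d k (ℓ-t) := by
        intro t ht
        have := (hIH t ht).2
        linarith
      rw [Finset.sum_congr rfl hsum]
      rcases eq_or_lt_of_le hℓ with h1 | h1
      · -- ℓ = 1
        have hmin : min (k-1) (ℓ-1) = 0 := by omega
        rw [hmin, show Finset.Icc 1 0 = ∅ from Finset.Icc_eq_empty (by omega),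
          Finset.sum_empty, if_pos (by omega), ← h1, d_one hk2]
        ring
      rcases le_or_gt ℓ (k-1) with hle | hgt
      · rw [show min (k-1) (ℓ-1) = ℓ-1 by omega, if_pos hle]
        have h2 : ∑ t ∈ Finset.Icc 1 (ℓ-1), -d k (ℓ-t) = 1 := by
          rw [Finset.sum_neg_distrib, d_sum_small hk2 (by omega) hle]
          ring
        rw [h2, d_eval_small hk2 (by omega) hle]
        ring
      · rw [show min (k-1) (ℓ-1) = k-1 by omega, if_neg (by omega)]
        rw [Finset.sum_neg_distrib, ← d_rec_large hk2 (by omega)]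
        ring

noncomputable def glue (k : ℕ) (m : List Bool) : List Bool :=
  List.replicate k true ++ (m ++ List.replicate k false)

lemma glue_inj (k : ℕ) : Function.Injective (glue k) := by
  intro x y hxy
  unfold glue at hxy
  have h1 := List.append_cancel_left hxy
  exact List.append_cancel_right h1

lemma Vnk_eq_image (k ℓ : ℕ) :
    Vnk (2*k+ℓ) k = ↑((PF k ℓ false true).image (glue k)) := by
  ext v
  simp only [Finset.coe_image, Set.mem_image, Finset.mem_coe]
  constructor
  · rintro ⟨hlen, hpre, hsuf, hh, hl, hnf, hnt⟩
    rw [show 2*k+ℓ - 2*k = ℓ by omega] at hh hl hnf hnt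
    have htake : List.replicate k true = v.take k := by
      rw [List.prefix_iff_eq_take] at hpre
      simpa using hpre
    have hdrop : List.replicate k false = v.drop (k + ℓ) := by
      rw [List.suffix_iff_eq_drop] at hsuf
      rw [hsuf]
      congr 1
      simp [hlen]
      omega
    set m := (v.drop k).take ℓ with hm
    have hmlen : m.length = ℓ := by
      simp [hm, hlen]
      omega
    refine ⟨m, mem_PF.mpr ⟨hmlen, hh, hl, hnf, hnt⟩, ?_⟩
    unfold glue
    rw [htake, hdrop, hm]
    rw [show v.drop (k+ℓ) = (v.drop k).drop ℓ by rw [List.drop_drop]]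
    rw [List.take_append_drop, List.take_append_drop]
  · rintro ⟨m, hm, rfl⟩
    obtain ⟨hmlen, hh, hl, hnf, hnt⟩ := mem_PF.mp hm
    have hmid : ((glue k m).drop k).take (2*k+ℓ - 2*k) = m := by
      unfold glue
      rw [List.drop_left' (by simp), show 2*k+ℓ - 2*k = ℓ by omega,
        List.take_left' hmlen]
    refine ⟨by simp [glue, hmlen]; ring, List.prefix_append _ _, ?_, ?_, ?_, ?_, ?_⟩
    · unfold glue
      rw [← List.append_assoc]
      exact List.suffix_append _ _
    · rw [hmid]; exact hh
    · rw [hmid]; exact hl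
    · rw [hmid]; exact hnf
    · rw [hmid]; exact hnt

open Classical in
lemma VkLe_eq (k n : ℕ) (hk : 1 ≤ k) :
    VkLe k n = ↑((Finset.Icc (2*k+2) n).biUnion
      (fun i => (PF k (i - 2*k) false true).image (glue k))) := by
  ext v
  simp only [VkLe, VkSet, Set.mem_setOf_eq, Set.mem_iUnion, Finset.coe_biUnion,
    Finset.mem_coe, Finset.mem_biUnion, Finset.mem_Icc, Set.mem_setOf_eq]
  constructor
  · rintro ⟨⟨i, hi, hv⟩, hlen⟩
    have hvlen : v.length = i := hv.1
    refine ⟨i, ⟨hi, by omega⟩, ?_⟩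
    have : Vnk i k = ↑((PF k (i - 2*k) false true).image (glue k)) := by
      have := Vnk_eq_image k (i - 2*k)
      rwa [show 2*k + (i - 2*k) = i by omega] at this
    rw [this] at hv
    simpa using hv
  · rintro ⟨i, ⟨hi1, hi2⟩, hv⟩
    have hVnk : v ∈ Vnk i k := by
      have := Vnk_eq_image k (i - 2*k)
      rw [show 2*k + (i - 2*k) = i by omega] at this
      rw [this]
      simpa using hv
    exact ⟨⟨i, hi1, hVnk⟩, by rw [hVnk.1]; omega⟩

open Classical in
lemma VkLe_ncard (k n : ℕ) (hk : 1 ≤ k) (hn : 2*k+2 ≤ n) :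
    (VkLe k n).ncard = ∑ ℓ ∈ Finset.Icc 2 (n - 2*k), (PF k ℓ false true).card := by
  rw [VkLe_eq k n hk, Set.ncard_coe_finset]
  rw [Finset.card_biUnion]
  · rw [show Finset.Icc (2*k+2) n
        = Finset.map (addRightEmbedding (2*k)) (Finset.Icc 2 (n - 2*k)) by
      rw [Finset.map_add_right_Icc]
      congr 1 <;> omega]
    rw [Finset.sum_map]
    refine Finset.sum_congr rfl (fun ℓ hℓ => ?_)
    simp only [Finset.mem_Icc] at hℓ
    rw [show (addRightEmbedding (2*k)) ℓ - 2*k = ℓ by simp [addRightEmbedding]]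
    exact Finset.card_image_of_injective _ (glue_inj k)
  · intro i hi j hj hij
    simp only [Finset.mem_coe, Finset.mem_Icc] at hi hj
    rw [Function.onFun, Finset.disjoint_left]
    intro v hvi hvj
    apply hij
    simp only [Finset.mem_image] at hvi hvj
    obtain ⟨m1, hm1, rfl⟩ := hvi
    obtain ⟨m2, hm2, heq⟩ := hvj
    have l1 : (glue k m1).length = i := by
      have := (mem_PF.mp hm1).1
      simp [glue, this]; omega
    have l2 : (glue k m2).length = j := by
      have := (mem_PF.mp hm2).1
      simp [glue, this]; omega
    rw [heq] at l2
    omega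

lemma sum_f_Icc2 {k m : ℕ} (hk : 3 ≤ k) (hm : 2 ≤ m) :
    (∑ ℓ ∈ Finset.Icc 2 m, f (k-1) (ℓ-1)) + 1 = S (k-1) (m-1) := by
  have hmap : Finset.Icc 2 m = Finset.map (addRightEmbedding 1) (Finset.Icc 1 (m-1)) := by
    rw [Finset.map_add_right_Icc]
    congr 1
    omega
  rw [hmap, Finset.sum_map]
  have h1 : ∀ j ∈ Finset.Icc 1 (m-1), f (k-1) ((addRightEmbedding 1) j - 1) = f (k-1) j := by
    intro j hj
    simp [addRightEmbedding]
  rw [Finset.sum_congr rfl h1]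
  have h2 : S (k-1) (m-1) = ∑ ℓ ∈ Finset.range m, f (k-1) ℓ := by
    unfold S
    rw [show m - 1 + 1 = m by omega]
  rw [h2, Finset.range_eq_Ico, Finset.sum_eq_sum_Ico_succ_bot (by omega),
    show Finset.Ico 1 m = Finset.Icc 1 (m-1) by rw [← Finset.Ico_add_one_right_eq_Icc]; congr 1; omega,
    f_small (show 0 < k - 1 by omega)]
  have : ∑ j ∈ Finset.Icc 1 (m-1), f (k-1) j = (Finset.Icc 1 (m-1)).sum (f (k-1)) := rfl
  omega

/-- For any `k ≥ 3` and `n ≥ 2k+2`,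
`|𝒱^(k)(n)| = (S^(k-1)(n - 2k - 1) - 1 + δ_n^(k)) / 2`. -/
theorem stmt_10 (k n : ℕ) (hk : 3 ≤ k) (hn : 2 * k + 2 ≤ n) :
    ((VkLe k n).ncard : ℚ) =
      ((S (k - 1) (n - 2 * k - 1) : ℚ) - 1 + (if k ∣ n then 1 else 0)) / 2 := by
  set m := n - 2 * k with hm
  have hm2 : 2 ≤ m := by omega
  have hV : (VkLe k n).ncard = ∑ ℓ ∈ Finset.Icc 2 m, (PF k ℓ false true).card :=
    VkLe_ncard k n (by omega) hn
  have hterm : ∀ ℓ ∈ Finset.Icc 2 m, 2 * ((PF k ℓ false true).card : ℤ)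
      = (f (k-1) (ℓ-1) : ℤ) + d k ℓ := by
    intro ℓ hℓ
    simp only [Finset.mem_Icc] at hℓ
    obtain ⟨h1, h2⟩ := main_count hk ℓ (by omega)
    have h1' : ((PF k ℓ false true).card : ℤ) + ((PF k ℓ false false).card : ℤ)
        = (f (k-1) (ℓ-1) : ℤ) := by exact_mod_cast congrArg (Nat.cast : ℕ → ℤ) h1
    linarith
  have hZ : 2 * ((∑ ℓ ∈ Finset.Icc 2 m, (PF k ℓ false true).card : ℕ) : ℤ)
      = ((S (k-1) (m-1) : ℕ) : ℤ) - 1 + (if m % k = 0 then 1 else 0) := by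
    push_cast
    rw [Finset.mul_sum, Finset.sum_congr rfl hterm, Finset.sum_add_distrib,
      sum_d_Icc2 (by omega) hm2]
    have := sum_f_Icc2 hk hm2
    have hcast : (∑ ℓ ∈ Finset.Icc 2 m, (f (k-1) (ℓ-1) : ℤ))
        = ((S (k-1) (m-1) : ℕ) : ℤ) - 1 := by
      have := congrArg (Nat.cast : ℕ → ℤ) this
      push_cast at this
      linarith
    rw [hcast]
  have hdvd : k ∣ n ↔ m % k = 0 := by
    rw [show (m % k = 0) ↔ k ∣ m from (Nat.dvd_iff_mod_eq_zero).symm]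
    constructor
    · intro h
      exact Nat.dvd_sub h (dvd_mul_left k 2)
    · intro h
      have : n = m + 2 * k := by omega
      rw [this]
      exact Nat.dvd_add h (dvd_mul_left k 2)
  rw [hV]
  rw [show n - 2 * k - 1 = m - 1 from rfl]
  by_cases hd : k ∣ n
  · rw [if_pos hd]
    rw [if_pos (hdvd.mp hd)] at hZ
    have : ((2 * (∑ ℓ ∈ Finset.Icc 2 m, (PF k ℓ false true).card : ℕ) : ℤ) : ℚ)
        = (((S (k-1) (m-1) : ℕ) : ℤ) : ℚ) - 1 + 1 := by
      rw [hZ]; push_cast; ring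
    push_cast at this ⊢
    linarith
  · rw [if_neg hd]
    rw [if_neg (fun h => hd (hdvd.mpr h))] at hZ
    have : ((2 * (∑ ℓ ∈ Finset.Icc 2 m, (PF k ℓ false true).card : ℕ) : ℤ) : ℚ)
        = (((S (k-1) (m-1) : ℕ) : ℤ) : ℚ) - 1 := by
      rw [hZ]; push_cast; ring
    push_cast at this ⊢
    linarith
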